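/- For s₀ ∈ ℂ with Re s₀ > 1, one has lim_{s→1⁺, s real} ( ζ₂(s₀, s) - ζ(s₀)/(s-1) ) = γ₂(s₀); in particular ζ₂(s₀, s), as a function of s, has a simple pole at s = 1 with residue ζ(s₀). -/

import Mathlib

open Filter Finset Topology

lemma eu2_norm_cpow (s : ℂ) (m : ℕ) :
    ‖((m + 1 : ℕ) : ℂ) ^ (-s)‖ = ((m : ℝ) + 1) ^ (-s.re) := by
  rw [Complex.norm_natCast_cpow_of_pos m.succ_pos]
  push_cast
  simp [Complex.neg_re]

lemma eu2_summable_cpow {s : ℂ} (hs : 1 < s.re) :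
    Summable (fun m : ℕ => ((m + 1 : ℕ) : ℂ) ^ (-s)) := by
  have h0 : Summable (fun n : ℕ => 1 / (n : ℂ) ^ s) :=
    Complex.summable_one_div_nat_cpow.mpr hs
  have h1 := (summable_nat_add_iff 1).mpr h0
  refine h1.congr fun n => ?_
  rw [Complex.cpow_neg, one_div]

lemma eu2_zeta_tsum {s : ℂ} (hs : 1 < s.re) :
    riemannZeta s = ∑' n : ℕ, ((n + 1 : ℕ) : ℂ) ^ (-s) := by
  rw [zeta_eq_tsum_one_div_nat_add_one_cpow hs]
  refine tsum_congr fun n => ?_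
  rw [Complex.cpow_neg, one_div]
  norm_cast

lemma eu2_summable_log {r : ℝ} (hr : 1 < r) :
    Summable (fun m : ℕ => ((m : ℝ) + 1) ^ (-r) * (2 + Real.log ((m : ℝ) + 1))) := by
  set ε : ℝ := (r - 1) / 2 with hεdef
  have hε : 0 < ε := by simp only [hεdef]; linarith
  have hsum : Summable (fun m : ℕ => (2 + 1 / ε) * ((m : ℝ) + 1) ^ (-(1 + ε))) := by
    apply Summable.mul_left
    have h0 : Summable (fun n : ℕ => (n : ℝ) ^ (-(1 + ε))) :=
      Real.summable_nat_rpow.mpr (by linarith)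
    have h1 := (summable_nat_add_iff 1).mpr h0
    refine h1.congr fun n => by push_cast; ring_nf
  refine hsum.of_nonneg_of_le (fun m => ?_) (fun m => ?_)
  · have h1 : (0:ℝ) ≤ ((m : ℝ) + 1) ^ (-r) := Real.rpow_nonneg (by positivity) _
    have h2 : (0:ℝ) ≤ Real.log ((m : ℝ) + 1) :=
      Real.log_nonneg (by linarith [Nat.cast_nonneg (α := ℝ) m])
    positivity
  · have hx : (1:ℝ) ≤ (m : ℝ) + 1 := by linarith [Nat.cast_nonneg (α := ℝ) m]
    have hx0 : (0:ℝ) < (m : ℝ) + 1 := by linarith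
    have hlog : Real.log ((m : ℝ) + 1) ≤ ((m : ℝ) + 1) ^ ε / ε :=
      Real.log_le_rpow_div (by linarith) hε
    have hεpow : (1:ℝ) ≤ ((m : ℝ) + 1) ^ ε := Real.one_le_rpow hx hε.le
    have key : 2 + Real.log ((m : ℝ) + 1) ≤ (2 + 1 / ε) * ((m : ℝ) + 1) ^ ε := by
      have : ((m : ℝ) + 1) ^ ε / ε = (1/ε) * ((m : ℝ) + 1) ^ ε := by ring
      nlinarith
    calc ((m : ℝ) + 1) ^ (-r) * (2 + Real.log ((m : ℝ) + 1))
        ≤ ((m : ℝ) + 1) ^ (-r) * ((2 + 1 / ε) * ((m : ℝ) + 1) ^ ε) := by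
          apply mul_le_mul_of_nonneg_left key (Real.rpow_nonneg hx0.le _)
      _ = (2 + 1 / ε) * ((m : ℝ) + 1) ^ (-(1 + ε)) := by
          have h2 : ((m : ℝ) + 1) ^ (-r) * ((m : ℝ) + 1) ^ ε = ((m : ℝ) + 1) ^ (-(1+ε)) := by
            rw [← Real.rpow_add hx0]
            congr 1
            simp only [hεdef]; ring
          calc ((m : ℝ) + 1) ^ (-r) * ((2 + 1 / ε) * ((m : ℝ) + 1) ^ ε)
              = (2 + 1 / ε) * (((m : ℝ) + 1) ^ (-r) * ((m : ℝ) + 1) ^ ε) := by ring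
            _ = (2 + 1 / ε) * ((m : ℝ) + 1) ^ (-(1 + ε)) := by rw [h2]

lemma eu2_harmonic_cast (n : ℕ) :
    (harmonic n : ℂ) = ∑ k ∈ Finset.range n, ((k + 1 : ℕ) : ℂ)⁻¹ := by
  rw [harmonic]
  push_cast
  rfl

lemma eu2_icc_harmonic (m N : ℕ) :
    ∑ n ∈ Finset.Icc 1 N, (1 : ℂ) / ((m + 1 + n : ℕ) : ℂ)
      = (harmonic (m + 1 + N) : ℂ) - (harmonic (m + 1) : ℂ) := by
  induction N with
  | zero => simp
  | succ N ih =>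
      rw [Finset.sum_Icc_succ_top (by omega : 1 ≤ N + 1), ih,
        show m + 1 + (N + 1) = (m + 1 + N) + 1 from rfl,
        show harmonic ((m + 1 + N) + 1) = harmonic (m + 1 + N) + (↑((m + 1 + N) + 1))⁻¹ from
          harmonic_succ _]
      push_cast
      ring

lemma eu2_partial_bound {σ : ℝ} (hσ : 1 ≤ σ) (m : ℕ) :
    ‖∑ k ∈ Finset.range (m + 1), ((k + 1 : ℕ) : ℂ) ^ (-(σ : ℂ))‖
      ≤ 1 + Real.log ((m : ℝ) + 1) := by
  have h1 : ‖∑ k ∈ Finset.range (m + 1), ((k + 1 : ℕ) : ℂ) ^ (-(σ : ℂ))‖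
      ≤ ∑ k ∈ Finset.range (m + 1), ((k : ℝ) + 1)⁻¹ := by
    refine (norm_sum_le _ _).trans (Finset.sum_le_sum fun k _ => ?_)
    have h2 : ‖((k + 1 : ℕ) : ℂ) ^ (-(σ : ℂ))‖ = ((k : ℝ) + 1) ^ (-σ) := by
      rw [Complex.norm_natCast_cpow_of_pos k.succ_pos]
      push_cast
      simp [Complex.neg_re]
    rw [h2]
    have hx : (1:ℝ) ≤ (k : ℝ) + 1 := by linarith [Nat.cast_nonneg (α := ℝ) k]
    calc ((k : ℝ) + 1) ^ (-σ) ≤ ((k : ℝ) + 1) ^ (-1 : ℝ) :=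
          Real.rpow_le_rpow_of_exponent_le hx (by linarith)
      _ = ((k : ℝ) + 1)⁻¹ := by rw [Real.rpow_neg_one]
  refine h1.trans ?_
  have h3 : ∑ k ∈ Finset.range (m + 1), ((k : ℝ) + 1)⁻¹ = (harmonic (m + 1) : ℝ) := by
    rw [harmonic]; push_cast; rfl
  rw [h3]
  have := harmonic_le_one_add_log (m + 1)
  push_cast at this ⊢
  linarith

lemma eu2_inner_tsum {σ : ℝ} (hσ : 1 < σ) (m : ℕ) :
    ∑' n : ℕ, ((m + n + 2 : ℕ) : ℂ) ^ (-(σ : ℂ))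
      = riemannZeta (σ : ℂ)
        - ∑ k ∈ Finset.range (m + 1), ((k + 1 : ℕ) : ℂ) ^ (-(σ : ℂ)) := by
  have hre : 1 < ((σ : ℂ)).re := by simpa using hσ
  have hf : Summable (fun n : ℕ => ((n + 1 : ℕ) : ℂ) ^ (-(σ : ℂ))) := by
    have h0 : Summable (fun n : ℕ => 1 / (n : ℂ) ^ (σ:ℂ)) :=
      Complex.summable_one_div_nat_cpow.mpr hre
    have h1 := (summable_nat_add_iff 1).mpr h0
    exact h1.congr fun n => by rw [Complex.cpow_neg, one_div]
  have key := Summable.sum_add_tsum_nat_add (m + 1) hf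
  have h2 : ∑' n : ℕ, ((m + n + 2 : ℕ) : ℂ) ^ (-(σ : ℂ))
      = ∑' n : ℕ, (((n + (m + 1)) + 1 : ℕ) : ℂ) ^ (-(σ : ℂ)) := by
    refine tsum_congr fun n => ?_
    congr 2
    omega
  rw [h2, eq_sub_iff_add_eq, add_comm]
  rw [key]
  rw [zeta_eq_tsum_one_div_nat_add_one_cpow hre]
  refine tsum_congr fun n => ?_
  rw [Complex.cpow_neg, one_div]
  norm_cast

lemma eu2_summable_rpow {r : ℝ} (hr : 1 < r) :
    Summable (fun m : ℕ => ((m : ℝ) + 1) ^ (-r)) := by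
  have h0 : Summable (fun n : ℕ => (n : ℝ) ^ (-r)) :=
    Real.summable_nat_rpow.mpr (by linarith)
  exact ((summable_nat_add_iff 1).mpr h0).congr fun n => by push_cast; ring_nf

lemma eu2_summable_mul {s₀ : ℂ} (h : 1 < s₀.re) {f : ℕ → ℂ}
    (hf : ∀ m, ‖f m‖ ≤ 2 + Real.log ((m : ℝ) + 1)) :
    Summable (fun m : ℕ => ((m + 1 : ℕ) : ℂ) ^ (-s₀) * f m) := by
  refine Summable.of_norm_bounded (eu2_summable_log h) fun m => ?_
  rw [norm_mul, eu2_norm_cpow]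
  exact mul_le_mul_of_nonneg_left (hf m) (Real.rpow_nonneg (by positivity) _)

set_option maxHeartbeats 1000000 in
lemma eu2_double {s₀ : ℂ} (h : 1 < s₀.re) {σ : ℝ} (hσ : 1 < σ) :
    ∑' p : ℕ × ℕ, ((p.1 + 1 : ℕ) : ℂ) ^ (-s₀) * ((p.1 + p.2 + 2 : ℕ) : ℂ) ^ (-(σ : ℂ))
      = riemannZeta s₀ * riemannZeta (σ : ℂ)
        - ∑' m : ℕ, ((m + 1 : ℕ) : ℂ) ^ (-s₀)
            * ∑ k ∈ Finset.range (m + 1), ((k + 1 : ℕ) : ℂ) ^ (-(σ : ℂ)) := by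
  have hre : 1 < ((σ : ℂ)).re := by simpa using hσ
  -- summability of the double sum
  have hbd : Summable (fun p : ℕ × ℕ =>
      ((p.1 : ℝ) + 1) ^ (-s₀.re) * ((p.2 : ℝ) + 1) ^ (-σ)) :=
    Summable.mul_of_nonneg (eu2_summable_rpow h) (eu2_summable_rpow hσ)
      (fun m => Real.rpow_nonneg (by positivity) _)
      (fun n => Real.rpow_nonneg (by positivity) _)
  have hsum : Summable (fun p : ℕ × ℕ =>
      ((p.1 + 1 : ℕ) : ℂ) ^ (-s₀) * ((p.1 + p.2 + 2 : ℕ) : ℂ) ^ (-(σ : ℂ))) := by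
    refine Summable.of_norm_bounded hbd fun p => ?_
    rw [norm_mul, eu2_norm_cpow]
    refine mul_le_mul_of_nonneg_left ?_ (Real.rpow_nonneg (by positivity) _)
    have h1 : ‖((p.1 + p.2 + 2 : ℕ) : ℂ) ^ (-(σ : ℂ))‖
        = ((p.1 + p.2 + 2 : ℕ) : ℝ) ^ (-σ) := by
      rw [Complex.norm_natCast_cpow_of_pos (by omega)]
      simp [Complex.neg_re]
    rw [h1]
    refine Real.rpow_le_rpow_of_nonpos (by positivity) ?_ (by linarith)
    push_cast; linarith [Nat.cast_nonneg (α := ℝ) p.1]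
  -- fiberwise summability
  have hfib : ∀ m : ℕ, Summable (fun n : ℕ => ((m + n + 2 : ℕ) : ℂ) ^ (-(σ : ℂ))) := by
    intro m
    have h1 := (summable_nat_add_iff (m + 1)).mpr (eu2_summable_cpow hre)
    refine h1.congr fun n => ?_
    congr 2
    omega
  rw [Summable.tsum_prod' hsum hsum.prod_factor]
  have hz : Summable (fun m : ℕ => ((m + 1 : ℕ) : ℂ) ^ (-s₀) * riemannZeta (σ : ℂ)) :=
    (eu2_summable_cpow h).mul_right _
  have hS : Summable (fun m : ℕ => ((m + 1 : ℕ) : ℂ) ^ (-s₀)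
      * ∑ k ∈ Finset.range (m + 1), ((k + 1 : ℕ) : ℂ) ^ (-(σ : ℂ))) := by
    refine eu2_summable_mul h fun m => ?_
    have := eu2_partial_bound hσ.le m
    have hl : 0 ≤ Real.log ((m : ℝ) + 1) := Real.log_nonneg (by linarith [Nat.cast_nonneg (α := ℝ) m])
    linarith
  calc (∑' m : ℕ, ∑' n : ℕ, ((m + 1 : ℕ) : ℂ) ^ (-s₀) * ((m + n + 2 : ℕ) : ℂ) ^ (-(σ : ℂ)))
      = ∑' m : ℕ, (((m + 1 : ℕ) : ℂ) ^ (-s₀) * riemannZeta (σ : ℂ)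
          - ((m + 1 : ℕ) : ℂ) ^ (-s₀)
            * ∑ k ∈ Finset.range (m + 1), ((k + 1 : ℕ) : ℂ) ^ (-(σ : ℂ))) := by
        refine tsum_congr fun m => ?_
        rw [tsum_mul_left, eu2_inner_tsum hσ m, mul_sub]
    _ = riemannZeta s₀ * riemannZeta (σ : ℂ)
        - ∑' m : ℕ, ((m + 1 : ℕ) : ℂ) ^ (-s₀)
            * ∑ k ∈ Finset.range (m + 1), ((k + 1 : ℕ) : ℂ) ^ (-(σ : ℂ)) := by
        rw [Summable.tsum_sub hz hS, tsum_mul_right, ← eu2_zeta_tsum h]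

lemma eu2_harmonic_bound (m : ℕ) :
    ‖((harmonic (m + 1) : ℚ) : ℂ)‖ ≤ 1 + Real.log ((m : ℝ) + 1) := by
  rw [Complex.norm_ratCast, abs_of_nonneg (by exact_mod_cast (harmonic_pos (Nat.succ_ne_zero m)).le)]
  have := harmonic_le_one_add_log (m + 1)
  push_cast at this ⊢
  linarith

set_option maxHeartbeats 1000000 in
theorem stmt15 (s₀ : ℂ) (h : 1 < s₀.re) (γ₂ : ℂ)
    (hγ₂ : Filter.Tendsto (fun N : ℕ =>
      ∑' m : ℕ, ((m + 1 : ℕ) : ℂ) ^ (-s₀) *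
        ((∑ n ∈ Finset.Icc 1 N, (1 : ℂ) / ((m + 1 + n : ℕ) : ℂ))
          - Complex.log ((m + 1 + N : ℕ) : ℂ)))
      Filter.atTop (nhds γ₂)) :
    Filter.Tendsto (fun σ : ℝ =>
      (∑' p : ℕ × ℕ, ((p.1 + 1 : ℕ) : ℂ) ^ (-s₀) * ((p.1 + p.2 + 2 : ℕ) : ℂ) ^ (-(σ : ℂ)))
        - riemannZeta s₀ / ((σ : ℂ) - 1))
      (nhdsWithin 1 (Set.Ioi 1)) (nhds γ₂) := by
  set γ : ℝ := Real.eulerMascheroniConstant with hγdef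
  set L : ℂ := ∑' m : ℕ, ((m + 1 : ℕ) : ℂ) ^ (-s₀) * ((harmonic (m + 1) : ℚ) : ℂ) with hLdef
  have hlog0 : ∀ m : ℕ, (0:ℝ) ≤ Real.log ((m : ℝ) + 1) := fun m =>
    Real.log_nonneg (by linarith [Nat.cast_nonneg (α := ℝ) m])
  have hL : Summable (fun m : ℕ => ((m + 1 : ℕ) : ℂ) ^ (-s₀) * ((harmonic (m + 1) : ℚ) : ℂ)) :=
    eu2_summable_mul h fun m => (eu2_harmonic_bound m).trans (by linarith [hlog0 m])
  -- Step 1: the N-limit identifies γ₂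
  have hγ₂val : γ₂ = riemannZeta s₀ * (γ : ℂ) - L := by
    refine tendsto_nhds_unique hγ₂ ?_
    have hab : ∀ m : ℕ, Tendsto (fun N : ℕ =>
        ((m + 1 : ℕ) : ℂ) ^ (-s₀) *
          ((∑ n ∈ Finset.Icc 1 N, (1 : ℂ) / ((m + 1 + n : ℕ) : ℂ))
            - Complex.log ((m + 1 + N : ℕ) : ℂ))) atTop
        (𝓝 (((m + 1 : ℕ) : ℂ) ^ (-s₀) * ((γ : ℂ) - ((harmonic (m + 1) : ℚ) : ℂ)))) := by
      intro m
      refine Tendsto.const_mul _ ?_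
      have h1 : Tendsto (fun N : ℕ => Real.eulerMascheroniSeq' (m + 1 + N)) atTop (𝓝 γ) := by
        have := Real.tendsto_eulerMascheroniSeq'.comp (tendsto_add_atTop_nat (m + 1))
        refine this.congr fun N => ?_
        simp only [Function.comp_apply]
        congr 1
        omega
      have h2 : Tendsto (fun N : ℕ =>
          ((Real.eulerMascheroniSeq' (m + 1 + N) : ℝ) : ℂ) - ((harmonic (m + 1) : ℚ) : ℂ)) atTop
          (𝓝 ((γ : ℂ) - ((harmonic (m + 1) : ℚ) : ℂ))) :=
        ((Complex.continuous_ofReal.tendsto _).comp h1).sub_const _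
      refine h2.congr fun N => ?_
      rw [eu2_icc_harmonic m N]
      have hlog : Complex.log ((m + 1 + N : ℕ) : ℂ) = ((Real.log ((m + 1 + N : ℕ) : ℝ) : ℝ) : ℂ) :=
        Complex.natCast_log.symm
      have hseq : Real.eulerMascheroniSeq' (m + 1 + N)
          = (harmonic (m + 1 + N) : ℝ) - Real.log ((m + 1 + N : ℕ) : ℝ) := by
        rw [Real.eulerMascheroniSeq', if_neg (by omega)]
      rw [hlog, hseq]
      push_cast
      ring
    have hN : Tendsto (fun N : ℕ =>
        ∑' m : ℕ, ((m + 1 : ℕ) : ℂ) ^ (-s₀) *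
          ((∑ n ∈ Finset.Icc 1 N, (1 : ℂ) / ((m + 1 + n : ℕ) : ℂ))
            - Complex.log ((m + 1 + N : ℕ) : ℂ))) atTop
        (𝓝 (∑' m : ℕ, ((m + 1 : ℕ) : ℂ) ^ (-s₀) * ((γ : ℂ) - ((harmonic (m + 1) : ℚ) : ℂ)))) := by
      refine tendsto_tsum_of_dominated_convergence (eu2_summable_log h) hab ?_
      refine Eventually.of_forall fun N => fun m => ?_
      rw [eu2_icc_harmonic m N]
      have hlog : Complex.log ((m + 1 + N : ℕ) : ℂ) = ((Real.log ((m + 1 + N : ℕ) : ℝ) : ℝ) : ℂ) :=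
        Complex.natCast_log.symm
      have hseq : ((harmonic (m + 1 + N) : ℚ) : ℂ) - ((harmonic (m + 1) : ℚ) : ℂ)
            - Complex.log ((m + 1 + N : ℕ) : ℂ)
          = ((Real.eulerMascheroniSeq' (m + 1 + N) : ℝ) : ℂ) - ((harmonic (m + 1) : ℚ) : ℂ) := by
        rw [hlog, Real.eulerMascheroniSeq', if_neg (by omega : ¬ (m + 1 + N = 0))]
        push_cast
        ring
      rw [norm_mul, eu2_norm_cpow, hseq]
      refine mul_le_mul_of_nonneg_left ?_ (Real.rpow_nonneg (by positivity) _)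
      refine (norm_sub_le _ _).trans ?_
      have hb1 : ‖((Real.eulerMascheroniSeq' (m + 1 + N) : ℝ) : ℂ)‖ ≤ 1 := by
        rw [Complex.norm_real, Real.norm_eq_abs, abs_of_nonneg]
        · calc Real.eulerMascheroniSeq' (m + 1 + N)
              ≤ Real.eulerMascheroniSeq' 1 :=
                Real.strictAnti_eulerMascheroniSeq'.antitone (by omega)
            _ = 1 := Real.eulerMascheroniSeq'_one
        · have h1 := Real.eulerMascheroniConstant_lt_eulerMascheroniSeq' (m + 1 + N)
          have h2 := Real.one_half_lt_eulerMascheroniConstant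
          linarith
      have hb2 := eu2_harmonic_bound m
      linarith
    have heq : (∑' m : ℕ, ((m + 1 : ℕ) : ℂ) ^ (-s₀) * ((γ : ℂ) - ((harmonic (m + 1) : ℚ) : ℂ)))
        = riemannZeta s₀ * (γ : ℂ) - L := by
      have h1 : Summable (fun m : ℕ => ((m + 1 : ℕ) : ℂ) ^ (-s₀) * (γ : ℂ)) :=
        (eu2_summable_cpow h).mul_right _
      calc (∑' m : ℕ, ((m + 1 : ℕ) : ℂ) ^ (-s₀) * ((γ : ℂ) - ((harmonic (m + 1) : ℚ) : ℂ)))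
          = ∑' m : ℕ, (((m + 1 : ℕ) : ℂ) ^ (-s₀) * (γ : ℂ)
              - ((m + 1 : ℕ) : ℂ) ^ (-s₀) * ((harmonic (m + 1) : ℚ) : ℂ)) := by
            refine tsum_congr fun m => ?_; ring
        _ = riemannZeta s₀ * (γ : ℂ) - L := by
            rw [Summable.tsum_sub h1 hL, tsum_mul_right, ← eu2_zeta_tsum h, hLdef]
    rw [← heq]
    exact hN
  -- Step 2: the σ-limit of the subtracted partial-sum term
  have hT : Tendsto (fun σ : ℝ => ∑' m : ℕ, ((m + 1 : ℕ) : ℂ) ^ (-s₀)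
      * ∑ k ∈ Finset.range (m + 1), ((k + 1 : ℕ) : ℂ) ^ (-(σ : ℂ)))
      (𝓝[>] (1:ℝ)) (𝓝 L) := by
    rw [hLdef]
    refine tendsto_tsum_of_dominated_convergence (eu2_summable_log h) (fun m => ?_) ?_
    · refine Tendsto.const_mul _ ?_
      have hcont : ∀ k : ℕ, Tendsto (fun σ : ℝ => ((k + 1 : ℕ) : ℂ) ^ (-(σ : ℂ)))
          (𝓝 (1:ℝ)) (𝓝 (((k + 1 : ℕ) : ℂ))⁻¹) := by
        intro k
        have hc : Continuous (fun σ : ℝ => ((k + 1 : ℕ) : ℂ) ^ (-(σ : ℂ))) := by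
          refine Continuous.const_cpow (Complex.continuous_ofReal.neg) (Or.inl ?_)
          exact_mod_cast Nat.succ_ne_zero k
        have := hc.tendsto 1
        simpa [Complex.cpow_neg_one] using this
      have hsum := tendsto_finset_sum (Finset.range (m + 1)) (fun k _ => hcont k)
      rw [eu2_harmonic_cast (m + 1)]
      exact hsum.mono_left nhdsWithin_le_nhds
    · filter_upwards [self_mem_nhdsWithin] with σ hσ
      intro m
      rw [norm_mul, eu2_norm_cpow]
      refine mul_le_mul_of_nonneg_left ?_ (Real.rpow_nonneg (by positivity) _)
      have := eu2_partial_bound (le_of_lt hσ) m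
      linarith [hlog0 m]
  -- Step 3: the zeta part
  have hZ : Tendsto (fun σ : ℝ => riemannZeta s₀ * (riemannZeta (σ : ℂ) - 1 / ((σ : ℂ) - 1)))
      (𝓝[>] (1:ℝ)) (𝓝 (riemannZeta s₀ * (γ : ℂ))) :=
    (ZetaAsymptotics.tendsto_riemannZeta_sub_one_div_nhds_right).const_mul _
  -- Combine
  rw [hγ₂val]
  refine (hZ.sub hT).congr' ?_
  filter_upwards [self_mem_nhdsWithin] with σ hσ
  rw [eu2_double h hσ]
  ring
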